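/- The function g₄(b) = h₃(b)/h₃'(b) is increasing on (0,∞), satisfies lim_{b↓0} g₄(b) = μ/(2δ), and lim_{b↑∞} g₄(b) = 1/θ₊. -/

import Mathlib

open Real Filter Set

/-- Positive root θ₊ of (σ²/2)r² + μr − δ = 0. -/
noncomputable def thetaP (σ μ δ : ℝ) : ℝ := (-μ + Real.sqrt (μ ^ 2 + 2 * σ ^ 2 * δ)) / σ ^ 2

/-- Negative root θ₋ of (σ²/2)r² + μr − δ = 0. -/
noncomputable def thetaM (σ μ δ : ℝ) : ℝ := (-μ - Real.sqrt (μ ^ 2 + 2 * σ ^ 2 * δ)) / σ ^ 2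

/-- η̄ = 2σ²/μ². -/
noncomputable def etaBar (σ μ : ℝ) : ℝ := 2 * σ ^ 2 / μ ^ 2

/-- x̂ = σ²/(μ(1 + δη̄)). -/
noncomputable def xHat (σ μ δ : ℝ) : ℝ := σ ^ 2 / (μ * (1 + δ * etaBar σ μ))

/-- ā₁. -/
noncomputable def aBar1 (σ μ δ : ℝ) : ℝ :=
  (δ * etaBar σ μ / (1 + δ * etaBar σ μ)) * xHat σ μ δ ^ (-(1 / (1 + δ * etaBar σ μ))) -
    thetaM σ μ δ * xHat σ μ δ ^ (δ * etaBar σ μ / (1 + δ * etaBar σ μ))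

/-- ā₂. -/
noncomputable def aBar2 (σ μ δ : ℝ) : ℝ :=
  (δ * etaBar σ μ / (1 + δ * etaBar σ μ)) * xHat σ μ δ ^ (-(1 / (1 + δ * etaBar σ μ))) -
    thetaP σ μ δ * xHat σ μ δ ^ (δ * etaBar σ μ / (1 + δ * etaBar σ μ))

/-- h₃(x) = (ā₁e^{θ₊x} − ā₂e^{θ₋x})/(θ₊ − θ₋). -/
noncomputable def h3 (σ μ δ : ℝ) (x : ℝ) : ℝ :=
  (aBar1 σ μ δ * Real.exp (thetaP σ μ δ * x) - aBar2 σ μ δ * Real.exp (thetaM σ μ δ * x)) /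
    (thetaP σ μ δ - thetaM σ μ δ)

/-- h₃'(x). -/
noncomputable def h3' (σ μ δ : ℝ) (x : ℝ) : ℝ :=
  (aBar1 σ μ δ * thetaP σ μ δ * Real.exp (thetaP σ μ δ * x) -
      aBar2 σ μ δ * thetaM σ μ δ * Real.exp (thetaM σ μ δ * x)) /
    (thetaP σ μ δ - thetaM σ μ δ)

/-- g₄(b) = h₃(b)/h₃'(b). -/
noncomputable def g4 (σ μ δ : ℝ) (b : ℝ) : ℝ := h3 σ μ δ b / h3' σ μ δ b

/-- Derivative of `x ↦ exp (c * x)`. -/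
lemma hasDerivAt_exp_const_mul (c x : ℝ) :
    HasDerivAt (fun y : ℝ => Real.exp (c * y)) (c * Real.exp (c * x)) x := by
  have h := ((hasDerivAt_id x).const_mul c).exp
  simp only [id_eq, mul_one] at h
  convert h using 1
  ring

/-- Key abstract lemma about `x ↦ (A e^{Px} - C e^{Mx}) / (A P e^{Px} - C M e^{Mx})`. -/
lemma aux_key (P M A C : ℝ) (hP : 0 < P) (hM : M < 0) (hA : 0 < A) (hC : 0 < C) :
    MonotoneOn (fun x => (A * Real.exp (P * x) - C * Real.exp (M * x)) /
        (A * P * Real.exp (P * x) - C * M * Real.exp (M * x))) (Set.Ioi 0) ∧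
    Tendsto (fun x => (A * Real.exp (P * x) - C * Real.exp (M * x)) /
        (A * P * Real.exp (P * x) - C * M * Real.exp (M * x)))
      (nhdsWithin 0 (Set.Ioi 0)) (nhds ((A - C) / (A * P - C * M))) ∧
    Tendsto (fun x => (A * Real.exp (P * x) - C * Real.exp (M * x)) /
        (A * P * Real.exp (P * x) - C * M * Real.exp (M * x)))
      atTop (nhds (1 / P)) := by
  have hPM : 0 < P - M := by linarith
  set N : ℝ → ℝ := fun x => A * Real.exp (P * x) - C * Real.exp (M * x) with hNdef
  set D : ℝ → ℝ := fun x => A * P * Real.exp (P * x) - C * M * Real.exp (M * x) with hDdef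
  have hD : ∀ x, 0 < D x := by
    intro x
    have h1 : 0 < A * P * Real.exp (P * x) := by positivity
    have h2 : C * M * Real.exp (M * x) < 0 :=
      mul_neg_of_neg_of_pos (mul_neg_of_pos_of_neg hC hM) (Real.exp_pos _)
    simp only [hDdef]
    linarith
  have hNd : ∀ x, HasDerivAt N (D x) x := by
    intro x
    have h : HasDerivAt (fun y => A * Real.exp (P * y) - C * Real.exp (M * y)) _ x :=
      ((hasDerivAt_exp_const_mul P x).const_mul A).sub
      ((hasDerivAt_exp_const_mul M x).const_mul C)
    convert h using 1
    simp only [hDdef]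
    ring
  have hDd : ∀ x, HasDerivAt D
      (A * P * P * Real.exp (P * x) - C * M * M * Real.exp (M * x)) x := by
    intro x
    have h : HasDerivAt (fun y => A * P * Real.exp (P * y) - C * M * Real.exp (M * y)) _ x :=
      ((hasDerivAt_exp_const_mul P x).const_mul (A * P)).sub
      ((hasDerivAt_exp_const_mul M x).const_mul (C * M))
    convert h using 1
    ring
  have hF : ∀ x, HasDerivAt (fun y => N y / D y)
      ((D x * D x - N x * (A * P * P * Real.exp (P * x) - C * M * M * Real.exp (M * x))) /
        D x ^ 2) x := by
    intro x
    exact (hNd x).div (hDd x) (hD x).ne'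
  have hnum : ∀ x, D x * D x - N x *
      (A * P * P * Real.exp (P * x) - C * M * M * Real.exp (M * x)) =
      A * C * (P - M) ^ 2 * (Real.exp (P * x) * Real.exp (M * x)) := by
    intro x
    simp only [hNdef, hDdef]
    ring
  have hcont : Continuous (fun x => N x / D x) := by
    apply Continuous.div
    · fun_prop
    · fun_prop
    · exact fun x => (hD x).ne'
  constructor
  · apply StrictMonoOn.monotoneOn
    apply strictMonoOn_of_deriv_pos (convex_Ioi 0) hcont.continuousOn
    intro x hx
    rw [(hF x).deriv, hnum x]
    apply div_pos
    · exact mul_pos (mul_pos (mul_pos hA hC) (pow_pos hPM 2))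
        (mul_pos (Real.exp_pos _) (Real.exp_pos _))
    · exact pow_pos (hD x) 2
  constructor
  · have h0 : N 0 / D 0 = (A - C) / (A * P - C * M) := by
      simp only [hNdef, hDdef, mul_zero, Real.exp_zero, mul_one]
    rw [← h0]
    exact ((hcont.tendsto 0).mono_left nhdsWithin_le_nhds)
  · have hident : ∀ x, N x / D x =
        (A - C * Real.exp ((M - P) * x)) / (A * P - C * M * Real.exp ((M - P) * x)) := by
      intro x
      have hden2 : 0 < A * P - C * M * Real.exp ((M - P) * x) := by
        have h1 : 0 < A * P := mul_pos hA hP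
        have h2 : C * M * Real.exp ((M - P) * x) < 0 :=
          mul_neg_of_neg_of_pos (mul_neg_of_pos_of_neg hC hM) (Real.exp_pos _)
        linarith
      have hE : Real.exp ((M - P) * x) * Real.exp (P * x) = Real.exp (M * x) := by
        rw [← Real.exp_add]
        ring_nf
      simp only [hNdef, hDdef]
      rw [div_eq_div_iff (hD x).ne' hden2.ne']
      simp only [hDdef]
      linear_combination (A * C * (P - M)) * hE
    have hq : Tendsto (fun x => Real.exp ((M - P) * x)) atTop (nhds 0) :=
      Real.tendsto_exp_atBot.comp (tendsto_id.const_mul_atTop_of_neg (by linarith))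
    have hnum_t : Tendsto (fun x => A - C * Real.exp ((M - P) * x)) atTop
        (nhds (A - C * 0)) := tendsto_const_nhds.sub (hq.const_mul C)
    have hden_t : Tendsto (fun x => A * P - C * M * Real.exp ((M - P) * x)) atTop
        (nhds (A * P - C * M * 0)) := tendsto_const_nhds.sub (hq.const_mul (C * M))
    have hlim : Tendsto (fun x => N x / D x) atTop (nhds ((A - C * 0) / (A * P - C * M * 0))) := by
      simp only [funext hident]
      exact hnum_t.div hden_t (by simp [(mul_pos hA hP).ne'])
    convert hlim using 2
    rw [mul_zero, sub_zero, mul_zero, sub_zero, div_mul_eq_div_div, div_self hA.ne']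

theorem g4_monotone_and_limits (σ μ δ : ℝ) (hσ : 0 < σ) (hμ : 0 < μ) (hδ : 0 < δ) :
    MonotoneOn (g4 σ μ δ) (Set.Ioi 0) ∧
    Tendsto (g4 σ μ δ) (nhdsWithin 0 (Set.Ioi 0)) (nhds (μ / (2 * δ))) ∧
    Tendsto (g4 σ μ δ) atTop (nhds (1 / thetaP σ μ δ)) := by
  have hσ2 : (0:ℝ) < σ ^ 2 := by positivity
  have hs0 : 0 < Real.sqrt (μ ^ 2 + 2 * σ ^ 2 * δ) := Real.sqrt_pos.mpr (by positivity)
  have hs2 : Real.sqrt (μ ^ 2 + 2 * σ ^ 2 * δ) ^ 2 = μ ^ 2 + 2 * σ ^ 2 * δ :=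
    Real.sq_sqrt (by positivity)
  have hsμ : μ < Real.sqrt (μ ^ 2 + 2 * σ ^ 2 * δ) := by nlinarith
  have hP : 0 < thetaP σ μ δ := by
    unfold thetaP
    apply div_pos (by linarith) hσ2
  have hM : thetaM σ μ δ < 0 := by
    unfold thetaM
    apply div_neg_of_neg_of_pos (by linarith) hσ2
  -- basic positivity for the exponent parameters
  have he : 0 < δ * etaBar σ μ := by unfold etaBar; positivity
  have h1e : 0 < 1 + δ * etaBar σ μ := by linarith
  have hx : 0 < xHat σ μ δ := by
    unfold xHat
    positivity
  set u : ℝ := xHat σ μ δ ^ (δ * etaBar σ μ / (1 + δ * etaBar σ μ)) with hudef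
  have hu : 0 < u := Real.rpow_pos_of_pos hx _
  have hv : xHat σ μ δ ^ (-(1 / (1 + δ * etaBar σ μ))) = u / xHat σ μ δ := by
    rw [show -(1 / (1 + δ * etaBar σ μ)) = δ * etaBar σ μ / (1 + δ * etaBar σ μ) - 1 by
        field_simp; ring,
      Real.rpow_sub hx, Real.rpow_one, hudef]
  have hpu : (δ * etaBar σ μ / (1 + δ * etaBar σ μ)) * (u / xHat σ μ δ) = (2 * δ / μ) * u := by
    have hxne : xHat σ μ δ ≠ 0 := hx.ne'
    have hpx : δ * etaBar σ μ / (1 + δ * etaBar σ μ) = 2 * δ / μ * xHat σ μ δ := by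
      unfold xHat etaBar
      field_simp
    rw [hpx]
    field_simp
  have hA_eq : aBar1 σ μ δ = (2 * δ / μ - thetaM σ μ δ) * u := by
    unfold aBar1
    rw [hv, hpu]
    ring
  have hC_eq : aBar2 σ μ δ = (2 * δ / μ - thetaP σ μ δ) * u := by
    unfold aBar2
    rw [hv, hpu]
    ring
  have hA : 0 < aBar1 σ μ δ := by
    rw [hA_eq]
    apply mul_pos _ hu
    have : 0 < 2 * δ / μ := by positivity
    linarith
  have hPlt : thetaP σ μ δ < 2 * δ / μ := by
    unfold thetaP
    rw [div_lt_div_iff₀ hσ2 hμ]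
    nlinarith
  have hC : 0 < aBar2 σ μ δ := by
    rw [hC_eq]
    apply mul_pos (by linarith) hu
  -- rewrite g4 as the abstract function
  have hPM : (0:ℝ) < thetaP σ μ δ - thetaM σ μ δ := by linarith
  have cancel : ∀ a b k : ℝ, k ≠ 0 → (a / k) / (b / k) = a / b := by
    intro a b k hk
    rcases eq_or_ne b 0 with h | h
    · simp [h]
    · field_simp
  have hfun : g4 σ μ δ = fun x =>
      (aBar1 σ μ δ * Real.exp (thetaP σ μ δ * x) - aBar2 σ μ δ * Real.exp (thetaM σ μ δ * x)) /
        (aBar1 σ μ δ * thetaP σ μ δ * Real.exp (thetaP σ μ δ * x) -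
          aBar2 σ μ δ * thetaM σ μ δ * Real.exp (thetaM σ μ δ * x)) := by
    funext x
    unfold g4 h3 h3'
    exact cancel _ _ _ hPM.ne'
  obtain ⟨hmono, hlim0, hlimtop⟩ := aux_key (thetaP σ μ δ) (thetaM σ μ δ)
    (aBar1 σ μ δ) (aBar2 σ μ δ) hP hM hA hC
  refine ⟨by rw [hfun]; exact hmono, ?_, by rw [hfun]; exact hlimtop⟩
  -- value of the limit at 0
  have hval : (aBar1 σ μ δ - aBar2 σ μ δ) /
      (aBar1 σ μ δ * thetaP σ μ δ - aBar2 σ μ δ * thetaM σ μ δ) = μ / (2 * δ) := by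
    rw [hA_eq, hC_eq]
    have hden : (2 * δ / μ - thetaM σ μ δ) * u * thetaP σ μ δ -
        (2 * δ / μ - thetaP σ μ δ) * u * thetaM σ μ δ =
        (2 * δ / μ) * ((thetaP σ μ δ - thetaM σ μ δ) * u) := by ring
    have hdenpos : 0 < (2 * δ / μ) * ((thetaP σ μ δ - thetaM σ μ δ) * u) := by positivity
    rw [hden, div_eq_div_iff hdenpos.ne' (by positivity : (2 * δ : ℝ) ≠ 0)]
    field_simp
    ring
  rw [hfun, ← hval]
  exact hlim0
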